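/- For every real B ≥ 0 and every φ ∈ ℝ, ∫₀^{B} ∫₀^{π} u / ( √(1+u²) ( 1 − (u/√(1+u²)) cos(φ − θ) ) ) dθ du ≤ π B². -/

import Mathlib

open MeasureTheory Real

lemma denom_pos {k : ℝ} (hk : |k| < 1) (x : ℝ) : 0 < 1 - k * Real.cos x := by
  have h1 : k * Real.cos x ≤ |k * Real.cos x| := le_abs_self _
  have h2 : |k * Real.cos x| ≤ |k| := by
    rw [abs_mul]
    calc |k| * |Real.cos x| ≤ |k| * 1 := by
          exact mul_le_mul_of_nonneg_left (Real.abs_cos_le_one x) (abs_nonneg k)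
      _ = |k| := mul_one _
  linarith

lemma circle_integral (k : ℝ) (hk : |k| < 1) :
    ∫ θ in (0:ℝ)..(2 * Real.pi), 1 / (1 - k * Real.cos θ)
      = 2 * Real.pi / Real.sqrt (1 - k ^ 2) := by
  have hk2 : 0 < 1 - k ^ 2 := by
    have := abs_lt.mp hk; nlinarith
  set w : ℝ := Real.sqrt (1 - k ^ 2) with hw
  have hwpos : 0 < w := Real.sqrt_pos.mpr hk2
  have hwsq : w ^ 2 = 1 - k ^ 2 := Real.sq_sqrt hk2.le
  have hd : ∀ x : ℝ, 0 < 1 + w - k * Real.cos x := by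
    intro x
    have := denom_pos hk x
    linarith
  set F : ℝ → ℝ := fun θ =>
    (θ + 2 * Real.arctan (k * Real.sin θ / (1 + w - k * Real.cos θ))) / w with hF
  have hderiv : ∀ θ : ℝ, HasDerivAt F (1 / (1 - k * Real.cos θ)) θ := by
    intro θ
    have h1 : HasDerivAt (fun x : ℝ => k * Real.sin x) (k * Real.cos θ) θ :=
      (Real.hasDerivAt_sin θ).const_mul k
    have h2 : HasDerivAt (fun x : ℝ => 1 + w - k * Real.cos x)
        (0 - k * (-Real.sin θ)) θ :=
      (hasDerivAt_const θ (1 + w)).sub ((Real.hasDerivAt_cos θ).const_mul k)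
    have hq : HasDerivAt (fun x : ℝ => k * Real.sin x / (1 + w - k * Real.cos x))
        ((k * Real.cos θ * (1 + w - k * Real.cos θ) -
          k * Real.sin θ * (0 - k * (-Real.sin θ))) / (1 + w - k * Real.cos θ) ^ 2) θ :=
      h1.div h2 (hd θ).ne'
    have harctan := (Real.hasDerivAt_arctan
      (k * Real.sin θ / (1 + w - k * Real.cos θ))).comp θ hq
    have hsum := ((hasDerivAt_id θ).add (harctan.const_mul 2)).div_const w
    refine hsum.congr_deriv ?_
    symm
    have hc : Real.sin θ ^ 2 = 1 - Real.cos θ ^ 2 := Real.sin_sq θ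
    have hdθ := hd θ
    have hden := denom_pos hk θ
    have e1 : 1 + (k * Real.sin θ / (1 + w - k * Real.cos θ)) ^ 2
        = (2 * (1 + w) * (1 - k * Real.cos θ)) / (1 + w - k * Real.cos θ) ^ 2 := by
      field_simp
      linear_combination hwsq + k ^ 2 * hc
    have e2 : k * Real.cos θ * (1 + w - k * Real.cos θ) - k * Real.sin θ * (0 - k * -Real.sin θ)
        = k * ((1 + w) * Real.cos θ - k) := by
      linear_combination (-(k ^ 2)) * hc
    rw [e1, e2]
    have h1w : (0:ℝ) < 1 + w := by linarith
    field_simp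
    linear_combination hwsq
  have hint : IntervalIntegrable (fun θ => 1 / (1 - k * Real.cos θ)) volume 0 (2 * Real.pi) := by
    apply Continuous.intervalIntegrable
    exact continuous_const.div (by continuity) (fun x => (denom_pos hk x).ne')
  have := intervalIntegral.integral_eq_sub_of_hasDerivAt (fun θ _ => hderiv θ) hint
  rw [this]
  simp [hF, Real.sin_two_pi, Real.cos_two_pi, Real.sin_zero, Real.cos_zero]

lemma sqrt_one_add_sq_pos (u : ℝ) : 0 < Real.sqrt (1 + u ^ 2) :=
  Real.sqrt_pos.mpr (by positivity)

lemma k_abs_lt (u : ℝ) : |u / Real.sqrt (1 + u ^ 2)| < 1 := by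
  have hS := sqrt_one_add_sq_pos u
  have h1 : |u| < Real.sqrt (1 + u ^ 2) := by
    rw [← Real.sqrt_sq_eq_abs]
    exact Real.sqrt_lt_sqrt (sq_nonneg u) (by linarith)
  rw [abs_div, abs_of_pos hS, div_lt_one hS]
  exact h1

lemma inner_le (φ u : ℝ) (hu : 0 ≤ u) :
    (∫ θ in (0 : ℝ)..Real.pi,
        u / (Real.sqrt (1 + u ^ 2) *
          (1 - u / Real.sqrt (1 + u ^ 2) * Real.cos (φ - θ)))) ≤ 2 * Real.pi * u := by
  set S : ℝ := Real.sqrt (1 + u ^ 2) with hSdef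
  have hS : 0 < S := sqrt_one_add_sq_pos u
  have hS2 : S ^ 2 = 1 + u ^ 2 := Real.sq_sqrt (by positivity)
  set k : ℝ := u / S with hkdef
  have hk : |k| < 1 := k_abs_lt u
  set h : ℝ → ℝ := fun x => 1 / (1 - k * Real.cos x) with hhdef
  have hhc : Continuous h :=
    continuous_const.div (by continuity) (fun x => (denom_pos hk x).ne')
  have hhc2 : Continuous (fun θ => h (φ - θ)) :=
    hhc.comp (continuous_const.sub continuous_id)
  have hh0 : ∀ x, 0 ≤ h x := fun x => le_of_lt (by
    have := denom_pos hk x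
    positivity)
  have hrw : ∀ θ : ℝ, u / (S * (1 - k * Real.cos (φ - θ))) = u / S * h (φ - θ) := by
    intro θ
    rw [hhdef]
    rw [mul_one_div, div_div]
  have step1 : (∫ θ in (0 : ℝ)..Real.pi, u / (S * (1 - k * Real.cos (φ - θ))))
      = u / S * ∫ θ in (0 : ℝ)..Real.pi, h (φ - θ) := by
    rw [← intervalIntegral.integral_const_mul]
    exact intervalIntegral.integral_congr fun θ _ => hrw θ
  have hpi := Real.pi_pos
  have step2 : (∫ θ in (0 : ℝ)..Real.pi, h (φ - θ))
      ≤ ∫ θ in (0 : ℝ)..(2 * Real.pi), h (φ - θ) := by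
    have i1 : IntervalIntegrable (fun θ => h (φ - θ)) volume 0 Real.pi :=
      hhc2.intervalIntegrable _ _
    have i2 : IntervalIntegrable (fun θ => h (φ - θ)) volume Real.pi (2 * Real.pi) :=
      hhc2.intervalIntegrable _ _
    rw [← intervalIntegral.integral_add_adjacent_intervals i1 i2]
    have : 0 ≤ ∫ θ in Real.pi..(2 * Real.pi), h (φ - θ) :=
      intervalIntegral.integral_nonneg (by linarith) (fun x _ => hh0 _)
    linarith
  have hper : Function.Periodic h (2 * Real.pi) := by
    intro x
    simp [hhdef, Real.cos_add_two_pi]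
  have step3 : (∫ θ in (0 : ℝ)..(2 * Real.pi), h (φ - θ))
      = 2 * Real.pi / Real.sqrt (1 - k ^ 2) := by
    rw [intervalIntegral.integral_comp_sub_left h φ]
    have := hper.intervalIntegral_add_eq (φ - 2 * Real.pi) 0
    rw [sub_add_cancel, zero_add] at this
    rw [sub_zero, this]
    exact circle_integral k hk
  have hsqrt : Real.sqrt (1 - k ^ 2) = 1 / S := by
    have hk2 : 1 - k ^ 2 = (1 / S) ^ 2 := by
      rw [hkdef]
      field_simp
      linarith [hS2]
    rw [hk2, Real.sqrt_sq (by positivity)]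
  calc (∫ θ in (0 : ℝ)..Real.pi, u / (S * (1 - k * Real.cos (φ - θ))))
      = u / S * ∫ θ in (0 : ℝ)..Real.pi, h (φ - θ) := step1
    _ ≤ u / S * (2 * Real.pi / Real.sqrt (1 - k ^ 2)) := by
        apply mul_le_mul_of_nonneg_left _ (by positivity)
        rw [← step3]; exact step2
    _ = 2 * Real.pi * u := by
        rw [hsqrt]
        field_simp

/-- For `B ≥ 0` and `φ ∈ ℝ`:
`∫₀^B ∫₀^π u / (√(1+u²)(1 - (u/√(1+u²)) cos(φ-θ))) dθ du ≤ π B²`. -/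
theorem stmt_8 (B φ : ℝ) (hB : 0 ≤ B) :
    (∫ u in (0 : ℝ)..B, ∫ θ in (0 : ℝ)..Real.pi,
        u / (Real.sqrt (1 + u ^ 2) *
          (1 - u / Real.sqrt (1 + u ^ 2) * Real.cos (φ - θ)))) ≤
      Real.pi * B ^ 2 := by
  have hpi := Real.pi_pos
  set f : ℝ → ℝ := fun u => ∫ θ in (0 : ℝ)..Real.pi,
      u / (Real.sqrt (1 + u ^ 2) *
        (1 - u / Real.sqrt (1 + u ^ 2) * Real.cos (φ - θ))) with hf
  have hf0 : ∀ u ∈ Set.Ioc (0:ℝ) B, 0 ≤ f u := by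
    intro u hu
    apply intervalIntegral.integral_nonneg (by linarith)
    intro θ _
    have hS := sqrt_one_add_sq_pos u
    have hden := denom_pos (k_abs_lt u) (φ - θ)
    have : 0 < Real.sqrt (1 + u ^ 2) *
        (1 - u / Real.sqrt (1 + u ^ 2) * Real.cos (φ - θ)) := mul_pos hS hden
    exact div_nonneg hu.1.le this.le
  have hfle : ∀ u ∈ Set.Ioc (0:ℝ) B, f u ≤ 2 * Real.pi * u := fun u hu =>
    inner_le φ u hu.1.le
  have hgi : IntegrableOn (fun u => 2 * Real.pi * u) (Set.Ioc (0:ℝ) B) volume :=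
    (continuous_const.mul continuous_id).integrableOn_Ioc
  have key : (∫ u in Set.Ioc (0:ℝ) B, f u) ≤ ∫ u in Set.Ioc (0:ℝ) B, 2 * Real.pi * u := by
    apply integral_mono_of_nonneg
    · exact ae_restrict_of_forall_mem measurableSet_Ioc hf0
    · exact hgi
    · exact ae_restrict_of_forall_mem measurableSet_Ioc hfle
  have hval : (∫ u in Set.Ioc (0:ℝ) B, 2 * Real.pi * u) = Real.pi * B ^ 2 := by
    rw [← intervalIntegral.integral_of_le hB, intervalIntegral.integral_const_mul,
      integral_id]
    ring
  rw [intervalIntegral.integral_of_le hB]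
  calc (∫ u in Set.Ioc (0:ℝ) B, f u) ≤ ∫ u in Set.Ioc (0:ℝ) B, 2 * Real.pi * u := key
    _ = Real.pi * B ^ 2 := hval
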